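/- Let Φ be a quantum channel from d_A×d_A to d_B×d_B complex matrices with Choi state J(Φ), let k ≥ 1, and let Ψ^{(k)} = Σ_{i=1}^k E_{ii} ⊗ E_{ii} on ℂ^k ⊗ ℂ^k. Then P_succ(Φ,k) equals the supremum, over positive semidefinite matrices W_{AĀ} on ℂ^{d_A} ⊗ ℂ^k and W_{BB̄} on ℂ^{d_B} ⊗ ℂ^k satisfying tr(W_{AĀ}) = 1, tr(W_{BB̄}) = 1, tr_A(W_{AĀ}) = I_k/k (partial trace over the ℂ^{d_A} factor) and tr_{B̄}(W_{BB̄}) = I_{d_B}/d_B (partial trace over the ℂ^k factor), of the quantity d_A·d_B · tr[ (J(Φ)_{AB} ⊗ Ψ^{(k)}_{ĀB̄}) · (W_{AĀ} ⊗ W_{BB̄}) ], where the trace is taken on ℂ^{d_A} ⊗ ℂ^k ⊗ ℂ^{d_B} ⊗ ℂ^k and the subscripts indicate on which tensor factors each operator acts (identity on the others). -/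

import Mathlib

open Matrix Kronecker BigOperators
open scoped ComplexOrder

noncomputable section

/-- The trace norm (sum of singular values) of a complex matrix: `tr √(AᴴA)`. -/
def traceNorm {m n : Type*} [Fintype m] [Fintype n] [DecidableEq n] (A : Matrix m n ℂ) : ℝ :=
  ((Matrix.posSemidef_conjTranspose_mul_self A).isHermitian.cfc Real.sqrt).trace.re

/-- A density matrix: positive semidefinite with trace one. -/
def IsDensity {n : Type*} [Fintype n] [DecidableEq n] (ρ : Matrix n n ℂ) : Prop :=
  ρ.PosSemidef ∧ ρ.trace = 1

/-- Trace norm contraction coefficient of a map on matrices. -/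
def etaTr {dA dB : ℕ} (Φ : Matrix (Fin dA) (Fin dA) ℂ → Matrix (Fin dB) (Fin dB) ℂ) : ℝ :=
  sSup {r : ℝ | ∃ ρ σ : Matrix (Fin dA) (Fin dA) ℂ, IsDensity ρ ∧ IsDensity σ ∧ ρ ≠ σ ∧
    r = traceNorm (Φ ρ - Φ σ) / traceNorm (ρ - σ)}

/-- Optimal success probability for transmitting one of `k` messages through `Φ`. -/
def Psucc {dA dB : ℕ} (Φ : Matrix (Fin dA) (Fin dA) ℂ → Matrix (Fin dB) (Fin dB) ℂ)
    (k : ℕ) : ℝ :=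
  sSup {r : ℝ | ∃ (M : Fin k → Matrix (Fin dB) (Fin dB) ℂ)
      (ρ : Fin k → Matrix (Fin dA) (Fin dA) ℂ),
    (∀ i, (M i).PosSemidef) ∧ (∑ i, M i = 1) ∧ (∀ i, IsDensity (ρ i)) ∧
    r = (1 / (k : ℝ)) * ∑ i, ((M i * Φ (ρ i)).trace).re}

/-- The Euclidean (ℓ₂) norm of a complex vector. -/
def l2norm {n : Type*} [Fintype n] (v : n → ℂ) : ℝ :=
  Real.sqrt (∑ i, ‖v i‖ ^ 2)

/-- Choi state of a map on matrices: `(1/dA) ∑ᵢⱼ Eᵢⱼ ⊗ Φ(Eᵢⱼ)`. -/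
def choi {dA dB : ℕ} (Φ : Matrix (Fin dA) (Fin dA) ℂ → Matrix (Fin dB) (Fin dB) ℂ) :
    Matrix (Fin dA × Fin dB) (Fin dA × Fin dB) ℂ :=
  (dA : ℂ)⁻¹ • ∑ i : Fin dA, ∑ j : Fin dA,
    (Matrix.single i j (1 : ℂ)) ⊗ₖ (Φ (Matrix.single i j (1 : ℂ)))

/-- Partial trace over the first tensor factor. -/
def ptraceFst {m n : Type*} [Fintype m] (W : Matrix (m × n) (m × n) ℂ) : Matrix n n ℂ :=
  Matrix.of fun b b' => ∑ a, W (a, b) (a, b')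

/-- Partial trace over the second tensor factor. -/
def ptraceSnd {m n : Type*} [Fintype n] (W : Matrix (m × n) (m × n) ℂ) : Matrix m m ℂ :=
  Matrix.of fun a a' => ∑ b, W (a, b) (a', b)

/-- The maximally correlated operator `Ψ⁽ᵏ⁾ = ∑ᵢ Eᵢᵢ ⊗ Eᵢᵢ` on `ℂᵏ ⊗ ℂᵏ`. -/
def PsiK (k : ℕ) : Matrix (Fin k × Fin k) (Fin k × Fin k) ℂ :=
  ∑ i : Fin k, Matrix.single i i (1 : ℂ) ⊗ₖ Matrix.single i i (1 : ℂ)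

/-- `J(Φ)_{AB} ⊗ Ψ⁽ᵏ⁾_{ĀB̄}` viewed as an operator on
`(ℂ^{dA} ⊗ ℂᵏ) ⊗ (ℂ^{dB} ⊗ ℂᵏ)` (with `J(Φ)` acting on the `A,B` factors and
`Ψ⁽ᵏ⁾` acting on the `Ā,B̄` factors). -/
def choiTensorPsi {dA dB : ℕ} (k : ℕ)
    (Φ : Matrix (Fin dA) (Fin dA) ℂ → Matrix (Fin dB) (Fin dB) ℂ) :
    Matrix ((Fin dA × Fin k) × (Fin dB × Fin k)) ((Fin dA × Fin k) × (Fin dB × Fin k)) ℂ :=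
  Matrix.of fun p q =>
    choi Φ (p.1.1, p.2.1) (q.1.1, q.2.1) * PsiK k (p.1.2, p.2.2) (q.1.2, q.2.2)

section AuxLemmas

variable {dA dB k : ℕ} {ι : Type} [Fintype ι]


lemma slice_posSemidef {m n : Type*} [Fintype m] [Fintype n] [DecidableEq m] [DecidableEq n]
    {W : Matrix (m × n) (m × n) ℂ} (hW : W.PosSemidef) (i : n) :
    (Matrix.of fun a a' => W (a, i) (a', i)).PosSemidef := by
  rw [Matrix.posSemidef_iff_dotProduct_mulVec]
  constructor
  · exact Matrix.ext fun a a' => by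
      simpa using congrFun (congrFun hW.1 (a, i)) (a', i)
  · intro x
    have := hW.dotProduct_mulVec_nonneg (fun p => if p.2 = i then x p.1 else 0)
    simpa [Matrix.mulVec, dotProduct, Fintype.sum_prod_type, Finset.mul_sum,
      Finset.sum_ite_eq', apply_ite, mul_ite] using this

lemma blockDiag_posSemidef {m n : Type*} [Fintype m] [Fintype n] [DecidableEq n]
    {ρ : n → Matrix m m ℂ} (h : ∀ i, (ρ i).PosSemidef) :
    (Matrix.of fun p q : m × n => if p.2 = q.2 then ρ p.2 p.1 q.1 else 0).PosSemidef := by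
  rw [Matrix.posSemidef_iff_dotProduct_mulVec]
  constructor
  · exact Matrix.ext fun p q => by
      by_cases hpq : p.2 = q.2
      · simp only [Matrix.conjTranspose_apply, Matrix.of_apply, hpq, if_true]
        simpa using congrFun (congrFun (h q.2).1 p.1) q.1
      · simp [Matrix.conjTranspose_apply, hpq, Ne.symm hpq]
  · intro x
    have key : (star x) ⬝ᵥ ((Matrix.of fun p q : m × n => if p.2 = q.2 then ρ p.2 p.1 q.1 else 0) *ᵥ x)
        = ∑ i : n, (star fun a => x (a, i)) ⬝ᵥ (ρ i *ᵥ fun a => x (a, i)) := by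
      simp only [Matrix.mulVec, dotProduct, Matrix.of_apply, Pi.star_apply,
        Fintype.sum_prod_type, ite_mul, zero_mul, mul_ite, mul_zero,
        Finset.mul_sum, Finset.sum_ite_eq, Finset.mem_univ, if_true]
      rw [Finset.sum_comm]
    rw [key]
    exact Finset.sum_nonneg fun i _ => (h i).dotProduct_mulVec_nonneg _


lemma posSemidef_real_smul {n : Type*} [Fintype n] {A : Matrix n n ℂ} (hA : A.PosSemidef)
    {c : ℝ} (hc : 0 ≤ c) : ((c : ℂ) • A).PosSemidef := by
  rw [Matrix.posSemidef_iff_dotProduct_mulVec]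
  constructor
  · exact Matrix.ext fun i j => by
      simp only [Matrix.conjTranspose_apply, Matrix.smul_apply, smul_eq_mul]
      have := congrFun (congrFun hA.1 i) j
      simp only [Matrix.conjTranspose_apply] at this
      rw [show star (A j i) = (starRingEnd ℂ) (A j i) from rfl] at this
      rw [show star ((c:ℂ) * A j i) = (starRingEnd ℂ) ((c:ℂ) * A j i) from rfl,
        _root_.map_mul, Complex.conj_ofReal, this]
  · intro x
    have h1 := hA.dotProduct_mulVec_nonneg x
    have h2 : (star x) ⬝ᵥ (((c : ℂ) • A) *ᵥ x) = (c : ℂ) * ((star x) ⬝ᵥ (A *ᵥ x)) := by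
      simp [Matrix.smul_mulVec, dotProduct_smul, smul_eq_mul]
    rw [h2]
    exact mul_nonneg (by exact_mod_cast Complex.zero_le_real.2 hc) h1

lemma choi_apply (K : ι → Matrix (Fin dB) (Fin dA) ℂ)
    (Φ : Matrix (Fin dA) (Fin dA) ℂ → Matrix (Fin dB) (Fin dB) ℂ)
    (hΦ : ∀ x, Φ x = ∑ i, K i * x * (K i)ᴴ) (a a' : Fin dA) (b b' : Fin dB) :
    choi Φ ((a, b)) ((a', b')) = (dA : ℂ)⁻¹ * ∑ m, K m b a * (starRingEnd ℂ) (K m b' a') := by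
  simp only [choi, Matrix.smul_apply, Matrix.sum_apply, Matrix.kroneckerMap_apply,
    Matrix.single, Matrix.of_apply, hΦ, Matrix.mul_apply, Matrix.conjTranspose_apply,
    smul_eq_mul]
  congr 1
  simp only [ite_and, ite_mul, one_mul, zero_mul, mul_ite, mul_zero, mul_one,
    Finset.sum_ite_eq, Finset.sum_ite_eq', Finset.mem_univ, if_true, apply_ite,
    Finset.sum_ite_irrel, Finset.sum_const_zero]
  rfl

lemma PsiK_apply (x y x' y' : Fin k) :
    PsiK k (x, y) (x', y') = if x' = x ∧ y = x ∧ y' = x then 1 else 0 := by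
  simp only [PsiK, Matrix.sum_apply, Matrix.kroneckerMap_apply, Matrix.single,
    Matrix.of_apply, ite_and, ite_mul, one_mul, zero_mul, mul_ite, mul_zero, mul_one,
    Finset.sum_ite_eq, Finset.sum_ite_eq', Finset.mem_univ, if_true, apply_ite,
    Finset.sum_ite_irrel, Finset.sum_const_zero]
  by_cases h1 : x' = x <;> by_cases h2 : y = x <;> by_cases h3 : y' = x <;>
    simp [h1, h2, h3] <;> try (intro; simp_all)

lemma sum_reorder6 {α₁ α₂ α₃ α₄ α₅ α₆ : Type*} [Fintype α₁] [Fintype α₂] [Fintype α₃]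
    [Fintype α₄] [Fintype α₅] [Fintype α₆] (f : α₁ → α₂ → α₃ → α₄ → α₅ → α₆ → ℂ) :
    ∑ a, ∑ i, ∑ b, ∑ c, ∑ d, ∑ m, f a i b c d m
      = ∑ i, ∑ m, ∑ a, ∑ c, ∑ b, ∑ d, f a i b c d m := by
  rw [show (∑ a, ∑ i, ∑ b, ∑ c, ∑ d, ∑ m, f a i b c d m)
      = ∑ x : α₁ × α₂ × α₃ × α₄ × α₅ × α₆,
        f x.1 x.2.1 x.2.2.1 x.2.2.2.1 x.2.2.2.2.1 x.2.2.2.2.2 from by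
    simp [Fintype.sum_prod_type]]
  rw [show (∑ i, ∑ m, ∑ a, ∑ c, ∑ b, ∑ d, f a i b c d m)
      = ∑ y : α₂ × α₆ × α₁ × α₄ × α₃ × α₅,
        f y.2.2.1 y.1 y.2.2.2.2.1 y.2.2.2.1 y.2.2.2.2.2 y.2.1 from by
    simp [Fintype.sum_prod_type]]
  exact Fintype.sum_equiv
    ⟨fun x => (x.2.1, x.2.2.2.2.2, x.1, x.2.2.2.1, x.2.2.1, x.2.2.2.2.1),
     fun y => (y.2.2.1, y.1, y.2.2.2.2.1, y.2.2.2.1, y.2.2.2.2.2, y.2.1),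
     fun _ => rfl, fun _ => rfl⟩ _ _ (fun _ => rfl)

lemma trace_formula (K : ι → Matrix (Fin dB) (Fin dA) ℂ)
    (Φ : Matrix (Fin dA) (Fin dA) ℂ → Matrix (Fin dB) (Fin dB) ℂ)
    (hΦ : ∀ x, Φ x = ∑ i, K i * x * (K i)ᴴ)
    (WA : Matrix (Fin dA × Fin k) (Fin dA × Fin k) ℂ)
    (WB : Matrix (Fin dB × Fin k) (Fin dB × Fin k) ℂ) :
    (choiTensorPsi k Φ * (WA ⊗ₖ WB)).trace
      = (dA : ℂ)⁻¹ * ∑ i : Fin k, ∑ m : ι, ∑ a : Fin dA, ∑ a' : Fin dA, ∑ b : Fin dB,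
          ∑ b' : Fin dB,
          K m b a * WA (a', i) (a, i) * (starRingEnd ℂ) (K m b' a') * WB (b', i) (b, i) := by
  simp only [Matrix.trace, Matrix.diag, Matrix.mul_apply, choiTensorPsi, Matrix.of_apply,
    Matrix.kroneckerMap_apply, choi_apply K Φ hΦ, PsiK_apply]
  simp only [Fintype.sum_prod_type, ite_and, mul_ite, ite_mul, mul_zero, zero_mul, mul_one,
    Finset.sum_ite_eq, Finset.sum_ite_eq', Finset.mem_univ, if_true,
    Finset.sum_ite_irrel, Finset.sum_const_zero, Finset.mul_sum, Finset.sum_mul]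
  rw [sum_reorder6]
  refine Finset.sum_congr rfl fun i _ => Finset.sum_congr rfl fun m _ =>
    Finset.sum_congr rfl fun a _ => Finset.sum_congr rfl fun a' _ =>
    Finset.sum_congr rfl fun b _ => Finset.sum_congr rfl fun b' _ => ?_
  ring


lemma sum_reorder5 {α₁ α₂ α₃ α₄ α₅ : Type*} [Fintype α₁] [Fintype α₂] [Fintype α₃]
    [Fintype α₄] [Fintype α₅] (f : α₁ → α₂ → α₃ → α₄ → α₅ → ℂ) :
    ∑ p, ∑ q, ∑ r, ∑ s, ∑ t, f p q r s t
      = ∑ r, ∑ t, ∑ s, ∑ q, ∑ p, f p q r s t := by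
  rw [show (∑ p, ∑ q, ∑ r, ∑ s, ∑ t, f p q r s t)
      = ∑ x : α₁ × α₂ × α₃ × α₄ × α₅, f x.1 x.2.1 x.2.2.1 x.2.2.2.1 x.2.2.2.2 from by
    simp [Fintype.sum_prod_type]]
  rw [show (∑ r, ∑ t, ∑ s, ∑ q, ∑ p, f p q r s t)
      = ∑ y : α₃ × α₅ × α₄ × α₂ × α₁, f y.2.2.2.2 y.2.2.2.1 y.1 y.2.2.1 y.2.1 from by
    simp [Fintype.sum_prod_type]]
  exact Fintype.sum_equiv
    ⟨fun x => (x.2.2.1, x.2.2.2.2, x.2.2.2.1, x.2.1, x.1),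
     fun y => (y.2.2.2.2, y.2.2.2.1, y.1, y.2.2.1, y.2.1),
     fun _ => rfl, fun _ => rfl⟩ _ _ (fun _ => rfl)

lemma trace_MPhi (K : ι → Matrix (Fin dB) (Fin dA) ℂ)
    (Φ : Matrix (Fin dA) (Fin dA) ℂ → Matrix (Fin dB) (Fin dB) ℂ)
    (hΦ : ∀ x, Φ x = ∑ i, K i * x * (K i)ᴴ)
    (M : Matrix (Fin dB) (Fin dB) ℂ) (ρ : Matrix (Fin dA) (Fin dA) ℂ) :
    (M * Φ ρ).trace = ∑ m : ι, ∑ a : Fin dA, ∑ a' : Fin dA, ∑ b : Fin dB, ∑ b' : Fin dB,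
      K m b a * ρ a a' * (starRingEnd ℂ) (K m b' a') * M b' b := by
  simp only [Matrix.trace, Matrix.diag, Matrix.mul_apply, hΦ, Matrix.sum_apply,
    Matrix.conjTranspose_apply, Finset.mul_sum, Finset.sum_mul]
  rw [sum_reorder5]
  refine Finset.sum_congr rfl fun m _ => Finset.sum_congr rfl fun a _ =>
    Finset.sum_congr rfl fun a' _ => Finset.sum_congr rfl fun b _ =>
    Finset.sum_congr rfl fun b' _ => ?_
  simp only [starRingEnd_apply]
  ring

end AuxLemmas

/-- `P_succ(Φ,k)` as a constrained bilinear program: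
it equals the supremum of `dA·dB·tr[(J(Φ)⊗Ψ⁽ᵏ⁾)(W_{AĀ} ⊗ W_{BB̄})]` over positive
semidefinite `W_{AĀ}, W_{BB̄}` of trace one with `tr_A W_{AĀ} = I/k` and
`tr_{B̄} W_{BB̄} = I/dB`. -/
theorem psucc_eq_bilinear_program {dA dB k : ℕ} {ι : Type} [Fintype ι]
    (hk : 1 ≤ k)
    (K : ι → Matrix (Fin dB) (Fin dA) ℂ)
    (hK : ∑ i, (K i)ᴴ * K i = 1)
    (Φ : Matrix (Fin dA) (Fin dA) ℂ → Matrix (Fin dB) (Fin dB) ℂ)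
    (hΦ : ∀ x, Φ x = ∑ i, K i * x * (K i)ᴴ) :
    Psucc Φ k = sSup {r : ℝ |
      ∃ (WA : Matrix (Fin dA × Fin k) (Fin dA × Fin k) ℂ)
        (WB : Matrix (Fin dB × Fin k) (Fin dB × Fin k) ℂ),
        WA.PosSemidef ∧ WB.PosSemidef ∧
        WA.trace = 1 ∧ WB.trace = 1 ∧
        ptraceFst WA = (k : ℂ)⁻¹ • (1 : Matrix (Fin k) (Fin k) ℂ) ∧
        ptraceSnd WB = (dB : ℂ)⁻¹ • (1 : Matrix (Fin dB) (Fin dB) ℂ) ∧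
        r = (dA : ℝ) * (dB : ℝ) *
          ((choiTensorPsi k Φ * (WA ⊗ₖ WB)).trace).re} := by
  have hkR : (k : ℝ) ≠ 0 := Nat.cast_ne_zero.2 (Nat.one_le_iff_ne_zero.1 hk)
  have hkC : (k : ℂ) ≠ 0 := Nat.cast_ne_zero.2 (Nat.one_le_iff_ne_zero.1 hk)
  have hdBA : dB = 0 → dA = 0 := by
    intro h
    by_contra hdA
    have a0 : Fin dA := ⟨0, Nat.pos_of_ne_zero hdA⟩
    have h1 := congrFun (congrFun hK a0) a0
    subst h
    simp [Matrix.sum_apply, Matrix.mul_apply, Matrix.one_apply] at h1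
  unfold Psucc
  congr 1
  ext r
  simp only [Set.mem_setOf_eq]
  constructor
  · rintro ⟨M, ρ, hM, hMsum, hρ, rfl⟩
    have hdA : dA ≠ 0 := by
      intro h
      have h1 := (hρ ⟨0, hk⟩).2
      subst h
      simp [Matrix.trace] at h1
    have hdB : dB ≠ 0 := fun h => hdA (hdBA h)
    have hdAC : (dA : ℂ) ≠ 0 := Nat.cast_ne_zero.2 hdA
    have hdBC : (dB : ℂ) ≠ 0 := Nat.cast_ne_zero.2 hdB
    refine ⟨Matrix.of (fun p q : Fin dA × Fin k =>
        if p.2 = q.2 then ((k : ℂ)⁻¹ • (ρ p.2)ᵀ) p.1 q.1 else 0),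
      Matrix.of (fun p q : Fin dB × Fin k =>
        if p.2 = q.2 then ((dB : ℂ)⁻¹ • M p.2) p.1 q.1 else 0), ?_, ?_, ?_, ?_, ?_, ?_, ?_⟩
    · refine blockDiag_posSemidef (ρ := fun i => (k : ℂ)⁻¹ • (ρ i)ᵀ) fun i => ?_
      rw [show ((k : ℂ)⁻¹ : ℂ) = (((k : ℝ)⁻¹ : ℝ) : ℂ) by push_cast; ring]
      exact posSemidef_real_smul (hρ i).1.transpose (by positivity)
    · refine blockDiag_posSemidef (ρ := fun i => (dB : ℂ)⁻¹ • M i) fun i => ?_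
      rw [show ((dB : ℂ)⁻¹ : ℂ) = (((dB : ℝ)⁻¹ : ℝ) : ℂ) by push_cast; ring]
      exact posSemidef_real_smul (hM i) (by positivity)
    · -- trace WA = 1
      have : (Matrix.of (fun p q : Fin dA × Fin k =>
          if p.2 = q.2 then ((k : ℂ)⁻¹ • (ρ p.2)ᵀ) p.1 q.1 else 0)).trace
          = ∑ i : Fin k, (k : ℂ)⁻¹ * (ρ i).trace := by
        simp only [Matrix.trace, Matrix.diag, Matrix.of_apply, Fintype.sum_prod_type,
          if_pos rfl, Matrix.smul_apply, Matrix.transpose_apply, smul_eq_mul, Finset.mul_sum]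
        exact Finset.sum_comm
      rw [this]
      simp only [(fun i => (hρ i).2 : ∀ i, (ρ i).trace = 1), mul_one, Finset.sum_const,
        Finset.card_univ, Fintype.card_fin, nsmul_eq_mul]
      exact mul_inv_cancel₀ hkC
    · -- trace WB = 1
      have : (Matrix.of (fun p q : Fin dB × Fin k =>
          if p.2 = q.2 then ((dB : ℂ)⁻¹ • M p.2) p.1 q.1 else 0)).trace
          = (dB : ℂ)⁻¹ * (∑ i, M i).trace := by
        simp only [Matrix.trace, Matrix.diag, Matrix.of_apply, Fintype.sum_prod_type,
          if_pos rfl, if_true, Matrix.smul_apply, smul_eq_mul, Finset.mul_sum,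
          Matrix.sum_apply]
      rw [this, hMsum, Matrix.trace_one]
      simp only [Fintype.card_fin]
      exact inv_mul_cancel₀ hdBC
    · -- ptraceFst
      ext i j
      simp only [ptraceFst, Matrix.of_apply, Matrix.smul_apply, Matrix.transpose_apply,
        smul_eq_mul, Finset.sum_ite_irrel, Finset.sum_const_zero, ← Finset.mul_sum]
      by_cases hij : i = j
      · subst hij
        rw [if_pos rfl, show (∑ a, ρ i a a) = (ρ i).trace from rfl, (hρ i).2,
          Matrix.one_apply_eq, mul_one]
      · rw [if_neg hij, Matrix.one_apply_ne hij, mul_zero]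
    · -- ptraceSnd
      ext b b'
      simp only [ptraceSnd, Matrix.of_apply, Matrix.smul_apply, smul_eq_mul,
        eq_self_iff_true, if_true, ← Finset.mul_sum]
      rw [show (∑ i, M i b b') = (∑ i, M i) b b' by simp [Matrix.sum_apply], hMsum]
    · -- value
      have key : (choiTensorPsi k Φ *
          ((Matrix.of (fun p q : Fin dA × Fin k =>
            if p.2 = q.2 then ((k : ℂ)⁻¹ • (ρ p.2)ᵀ) p.1 q.1 else 0)) ⊗ₖ
           (Matrix.of (fun p q : Fin dB × Fin k =>
            if p.2 = q.2 then ((dB : ℂ)⁻¹ • M p.2) p.1 q.1 else 0)))).trace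
          = (dA : ℂ)⁻¹ * ((k : ℂ)⁻¹ * ((dB : ℂ)⁻¹ * ∑ i, (M i * Φ (ρ i)).trace)) := by
        rw [trace_formula K Φ hΦ]
        congr 1
        simp only [Finset.mul_sum]
        refine Finset.sum_congr rfl fun i _ => ?_
        rw [trace_MPhi K Φ hΦ]
        simp only [Finset.mul_sum]
        refine Finset.sum_congr rfl fun m _ => Finset.sum_congr rfl fun a _ =>
          Finset.sum_congr rfl fun a' _ => Finset.sum_congr rfl fun b _ =>
          Finset.sum_congr rfl fun b' _ => ?_
        simp only [Matrix.of_apply, if_pos rfl, if_true, Matrix.smul_apply,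
          Matrix.transpose_apply, smul_eq_mul]
        ring
      rw [key]
      have hre : ((dA : ℂ)⁻¹ * ((k : ℂ)⁻¹ * ((dB : ℂ)⁻¹ * ∑ i, (M i * Φ (ρ i)).trace))).re
          = (dA : ℝ)⁻¹ * ((k : ℝ)⁻¹ * ((dB : ℝ)⁻¹ * (∑ i, (M i * Φ (ρ i)).trace).re)) := by
        rw [show ((dA : ℂ))⁻¹ = (((dA : ℝ)⁻¹ : ℝ) : ℂ) by push_cast; ring,
          show ((k : ℂ))⁻¹ = (((k : ℝ)⁻¹ : ℝ) : ℂ) by push_cast; ring,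
          show ((dB : ℂ))⁻¹ = (((dB : ℝ)⁻¹ : ℝ) : ℂ) by push_cast; ring]
        simp [Complex.mul_re]
      rw [hre, Complex.re_sum]
      have hdAR : (dA : ℝ) ≠ 0 := Nat.cast_ne_zero.2 hdA
      have hdBR : (dB : ℝ) ≠ 0 := Nat.cast_ne_zero.2 hdB
      field_simp
  · rintro ⟨WA, WB, hWA, hWB, htA, htB, hpA, hpB, rfl⟩
    have hdA : dA ≠ 0 := by
      intro h
      subst h
      rw [show WA.trace = 0 by simp [Matrix.trace]] at htA
      exact one_ne_zero htA.symm
    have hdB : dB ≠ 0 := by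
      intro h
      subst h
      rw [show WB.trace = 0 by simp [Matrix.trace]] at htB
      exact one_ne_zero htB.symm
    have hdAC : (dA : ℂ) ≠ 0 := Nat.cast_ne_zero.2 hdA
    have hdBC : (dB : ℂ) ≠ 0 := Nat.cast_ne_zero.2 hdB
    refine ⟨fun i => (dB : ℂ) • Matrix.of (fun b b' => WB (b, i) (b', i)),
      fun i => (k : ℂ) • Matrix.of (fun a a' => WA (a', i) (a, i)), ?_, ?_, ?_, ?_⟩
    · intro i
      rw [show ((dB : ℂ)) = (((dB : ℝ) : ℝ) : ℂ) by push_cast; ring]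
      exact posSemidef_real_smul (slice_posSemidef hWB i) (by positivity)
    · -- sum M = 1
      ext b b'
      have h1 := congrFun (congrFun hpB b) b'
      simp only [ptraceSnd, Matrix.of_apply, Matrix.smul_apply, smul_eq_mul] at h1
      simp only [Matrix.sum_apply, Matrix.smul_apply, Matrix.of_apply, smul_eq_mul,
        ← Finset.mul_sum, h1]
      rw [← mul_assoc, mul_inv_cancel₀ hdBC, one_mul]
    · -- densities
      intro i
      constructor
      · rw [show ((k : ℂ)) = (((k : ℝ) : ℝ) : ℂ) by push_cast; ring]
        refine posSemidef_real_smul ?_ (by positivity)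
        exact (slice_posSemidef hWA i).transpose
      · have h1 := congrFun (congrFun hpA i) i
        simp only [ptraceFst, Matrix.of_apply, Matrix.smul_apply, smul_eq_mul,
          Matrix.one_apply_eq, mul_one] at h1
        simp only [Matrix.trace, Matrix.diag, Matrix.smul_apply, Matrix.of_apply,
          smul_eq_mul, ← Finset.mul_sum]
        rw [show (∑ a, WA (a, i) (a, i)) = (k : ℂ)⁻¹ from h1, mul_inv_cancel₀ hkC]
    · -- value
      have key : ∑ i : Fin k, (((dB : ℂ) • Matrix.of (fun b b' => WB (b, i) (b', i))) *
            Φ ((k : ℂ) • Matrix.of (fun a a' => WA (a', i) (a, i)))).trace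
          = (k : ℂ) * ((dB : ℂ) * ((dA : ℂ) *
            (choiTensorPsi k Φ * (WA ⊗ₖ WB)).trace)) := by
        rw [trace_formula K Φ hΦ, mul_inv_cancel_left₀ hdAC]
        rw [Finset.mul_sum, Finset.mul_sum]
        refine Finset.sum_congr rfl fun i _ => ?_
        rw [trace_MPhi K Φ hΦ]
        simp only [Finset.mul_sum]
        refine Finset.sum_congr rfl fun m _ => Finset.sum_congr rfl fun a _ =>
          Finset.sum_congr rfl fun a' _ => Finset.sum_congr rfl fun b _ =>
          Finset.sum_congr rfl fun b' _ => ?_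
        simp only [Matrix.smul_apply, Matrix.of_apply, smul_eq_mul]
        ring
      have hre := congrArg Complex.re key
      rw [Complex.re_sum] at hre
      rw [show ((k : ℂ) * ((dB : ℂ) * ((dA : ℂ) *
            (choiTensorPsi k Φ * (WA ⊗ₖ WB)).trace))).re
          = (k : ℝ) * ((dB : ℝ) * ((dA : ℝ) *
            ((choiTensorPsi k Φ * (WA ⊗ₖ WB)).trace).re)) by
        simp [Complex.mul_re]] at hre
      rw [hre]
      field_simp
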